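/- Let G = (V, E) be an undirected graph on n vertices and G_p the random subgraph keeping each edge independently with probability p ∈ (0, 1). Then with high probability the arboricity satisfies λ(G_p) ∈ [(1 − ε)·p·λ(G) − O(log n / ε), (1 + ε)·p·λ(G) + O(log n / ε)]. -/

import Mathlib

open Finset
open scoped NNRat Classical

/-- Degree of `u` inside `S` in the undirected graph with edge set `F`. -/
def edegIn {n : ℕ} (F : Finset (Sym2 (Fin n))) (S : Finset (Fin n)) (u : Fin n) : ℕ :=
  (S.filter fun w => w ≠ u ∧ s(u, w) ∈ F).card

/-- Minimum degree of the induced subgraph on `S`. -/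
def emindegIn {n : ℕ} (F : Finset (Sym2 (Fin n))) (S : Finset (Fin n)) : ℕ :=
  if h : S.Nonempty then S.inf' h (edegIn F S) else 0

/-- Coreness of `v` in the undirected graph with edge set `F`. -/
def coreE {n : ℕ} (F : Finset (Sym2 (Fin n))) (v : Fin n) : ℕ :=
  ((univ : Finset (Fin n)).powerset.filter fun S => v ∈ S).sup (emindegIn F)

/-- Density of the undirected graph with edge set `F`: the maximum over nonempty
`S` of `|F[S]| / |S|`. -/
def densE {n : ℕ} (F : Finset (Sym2 (Fin n))) : ℚ≥0 :=
  ((univ : Finset (Fin n)).powerset.filter fun S => S.Nonempty).sup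
    fun S => ((F ∩ S.sym2).card : ℚ≥0) / (S.card : ℚ≥0)

/-- Arboricity via Nash-Williams: `max` over `S` with `|S| ≥ 2` of `⌈|F[S]|/(|S|−1)⌉`. -/
def arbE {n : ℕ} (F : Finset (Sym2 (Fin n))) : ℕ :=
  ((univ : Finset (Fin n)).powerset.filter fun S => 2 ≤ S.card).sup
    fun S => ⌈((F ∩ S.sym2).card : ℚ) / ((S.card : ℚ) - 1)⌉₊

/-- The probability, when each edge of `E0` is kept independently with probability `p`,
that the resulting random edge subset satisfies `A`. -/
noncomputable def probE {n : ℕ} (E0 : Finset (Sym2 (Fin n))) (p : ℝ)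
    (A : Finset (Sym2 (Fin n)) → Prop) : ℝ :=
  ∑ F ∈ E0.powerset,
    if A F then p ^ F.card * (1 - p) ^ (E0.card - F.card) else 0

namespace ArbAux
variable {n : ℕ}

noncomputable def wgt (E0 : Finset (Sym2 (Fin n))) (p : ℝ) (F : Finset (Sym2 (Fin n))) : ℝ :=
  p ^ F.card * (1 - p) ^ (E0.card - F.card)

lemma wgt_nonneg {E0 F : Finset (Sym2 (Fin n))} {p : ℝ} (h0 : 0 ≤ p) (h1 : p ≤ 1) :
    0 ≤ wgt E0 p F :=
  mul_nonneg (pow_nonneg h0 _) (pow_nonneg (by linarith) _)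

lemma sum_wgt (E0 : Finset (Sym2 (Fin n))) (p : ℝ) :
    ∑ F ∈ E0.powerset, wgt E0 p F = 1 := by
  have h := Finset.prod_add (fun _ : Sym2 (Fin n) => p) (fun _ => 1 - p) E0
  simp only [add_sub_cancel, Finset.prod_const_one, Finset.prod_const] at h
  calc ∑ F ∈ E0.powerset, wgt E0 p F
      = ∑ t ∈ E0.powerset, p ^ t.card * (1 - p) ^ (E0 \ t).card := by
        refine Finset.sum_congr rfl fun t ht => ?_
        rw [Finset.card_sdiff_of_subset (Finset.mem_powerset.mp ht)]; rfl
    _ = 1 := h.symm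

lemma mgf (E0 E1 : Finset (Sym2 (Fin n))) (hE : E1 ⊆ E0) (p z : ℝ) :
    ∑ F ∈ E0.powerset, wgt E0 p F * z ^ (F ∩ E1).card
      = ((1 - p) + p * z) ^ E1.card := by
  have h := Finset.prod_add (fun i : Sym2 (Fin n) => if i ∈ E1 then p * z else p)
    (fun _ => 1 - p) E0
  have hL : ∏ i ∈ E0, ((if i ∈ E1 then p * z else p) + (1 - p))
      = ((1 - p) + p * z) ^ E1.card := by
    have : ∀ i ∈ E0, ((if i ∈ E1 then p * z else p) + (1 - p))
        = if i ∈ E1 then (1 - p) + p * z else 1 := by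
      intro i _; by_cases hi : i ∈ E1 <;> simp [hi] <;> ring
    rw [Finset.prod_congr rfl this, Finset.prod_ite, Finset.prod_const, Finset.prod_const,
      one_pow, mul_one, Finset.filter_mem_eq_inter, Finset.inter_eq_right.mpr hE]
  have hR : ∀ t ∈ E0.powerset,
      (∏ i ∈ t, (if i ∈ E1 then p * z else p)) * ∏ _i ∈ E0 \ t, (1 - p)
        = wgt E0 p t * z ^ (t ∩ E1).card := by
    intro t ht
    rw [Finset.prod_ite, Finset.prod_const, Finset.prod_const, Finset.prod_const,
      Finset.filter_mem_eq_inter]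
    have hcard : (t ∩ E1).card + (Finset.filter (fun i => ¬ i ∈ E1) t).card = t.card := by
      rw [← Finset.filter_mem_eq_inter]
      exact Finset.card_filter_add_card_filter_not _
    have h2 : (Finset.filter (fun i => ¬ i ∈ E1) t).card = t.card - (t ∩ E1).card := by omega
    rw [h2, Finset.card_sdiff_of_subset (Finset.mem_powerset.mp ht)]
    have hle : (t ∩ E1).card ≤ t.card := Finset.card_le_card (Finset.inter_subset_left)
    have hp : p ^ t.card = p ^ (t ∩ E1).card * p ^ (t.card - (t ∩ E1).card) := by
      rw [← pow_add]; congr 1; omega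
    unfold wgt
    rw [mul_pow, hp]
    ring
  rw [hL, Finset.sum_congr rfl hR] at h
  exact h.symm

lemma probE_eq (E0 : Finset (Sym2 (Fin n))) (p : ℝ) (A : Finset (Sym2 (Fin n)) → Prop) :
    probE E0 p A = ∑ F ∈ E0.powerset, if A F then wgt E0 p F else 0 := rfl

lemma probE_nonneg {E0 : Finset (Sym2 (Fin n))} {p : ℝ} (h0 : 0 ≤ p) (h1 : p ≤ 1)
    (A : Finset (Sym2 (Fin n)) → Prop) : 0 ≤ probE E0 p A := by
  rw [probE_eq]
  refine Finset.sum_nonneg fun F _ => ?_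
  split
  · exact wgt_nonneg h0 h1
  · exact le_refl 0

lemma probE_mono {E0 : Finset (Sym2 (Fin n))} {p : ℝ} (h0 : 0 ≤ p) (h1 : p ≤ 1)
    {A B : Finset (Sym2 (Fin n)) → Prop}
    (hAB : ∀ F ∈ E0.powerset, A F → B F) : probE E0 p A ≤ probE E0 p B := by
  rw [probE_eq, probE_eq]
  refine Finset.sum_le_sum fun F hF => ?_
  by_cases hA : A F
  · simp [hA, hAB F hF hA]
  · simp only [hA, if_false]
    split
    · exact wgt_nonneg h0 h1
    · exact le_refl _

lemma one_sub_le_probE {E0 : Finset (Sym2 (Fin n))} {p : ℝ}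
    {A : Finset (Sym2 (Fin n)) → Prop} {δ : ℝ}
    (h : probE E0 p (fun F => ¬ A F) ≤ δ) : 1 - δ ≤ probE E0 p A := by
  have hsplit : probE E0 p A + probE E0 p (fun F => ¬ A F) = 1 := by
    rw [probE_eq, probE_eq, ← Finset.sum_add_distrib, ← sum_wgt E0 p]
    refine Finset.sum_congr rfl fun F _ => ?_
    by_cases hA : A F <;> simp [hA]
  linarith

lemma probE_or {E0 : Finset (Sym2 (Fin n))} {p : ℝ} (h0 : 0 ≤ p) (h1 : p ≤ 1)
    {A B : Finset (Sym2 (Fin n)) → Prop} :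
    probE E0 p (fun F => A F ∨ B F) ≤ probE E0 p A + probE E0 p B := by
  rw [probE_eq, probE_eq, probE_eq, ← Finset.sum_add_distrib]
  refine Finset.sum_le_sum fun F hF => ?_
  by_cases hA : A F
  · by_cases hB : B F <;> simp [hA, hB] <;> nlinarith [wgt_nonneg (E0 := E0) (F := F) h0 h1]
  · by_cases hB : B F <;> simp [hA, hB] <;> nlinarith [wgt_nonneg (E0 := E0) (F := F) h0 h1]

lemma probE_bUnion {E0 : Finset (Sym2 (Fin n))} {p : ℝ} (h0 : 0 ≤ p) (h1 : p ≤ 1)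
    (T : Finset (Finset (Fin n))) (B : Finset (Fin n) → Finset (Sym2 (Fin n)) → Prop) :
    probE E0 p (fun F => ∃ S ∈ T, B S F) ≤ ∑ S ∈ T, probE E0 p (B S) := by
  calc probE E0 p (fun F => ∃ S ∈ T, B S F)
      ≤ ∑ F ∈ E0.powerset, ∑ S ∈ T, (if B S F then wgt E0 p F else 0) := by
        rw [probE_eq]
        refine Finset.sum_le_sum fun F _ => ?_
        by_cases hex : ∃ S ∈ T, B S F
        · rw [if_pos hex]
          obtain ⟨S0, hS0, hB0⟩ := hex
          have heq : (if B S0 F then wgt E0 p F else 0) = wgt E0 p F := by simp [hB0]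
          calc wgt E0 p F = (if B S0 F then wgt E0 p F else 0) := heq.symm
            _ ≤ ∑ S ∈ T, (if B S F then wgt E0 p F else 0) := by
                refine Finset.single_le_sum (f := fun S => if B S F then wgt E0 p F else 0) (fun S _ => ?_) hS0
                split
                · exact wgt_nonneg h0 h1
                · exact le_refl 0
        · rw [if_neg hex]
          refine Finset.sum_nonneg fun S _ => ?_
          split
          · exact wgt_nonneg h0 h1
          · exact le_refl 0
    _ = ∑ S ∈ T, probE E0 p (B S) := by
        rw [Finset.sum_comm]
        exact Finset.sum_congr rfl fun S _ => (probE_eq E0 p (B S)).symm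

lemma markov_upper {E0 E1 : Finset (Sym2 (Fin n))} (hE : E1 ⊆ E0) {p z : ℝ}
    (h0 : 0 ≤ p) (h1 : p ≤ 1) (hz : 1 ≤ z) (a : ℝ) :
    probE E0 p (fun F => a ≤ ((F ∩ E1).card : ℝ))
      ≤ z ^ (-a) * ((1 - p) + p * z) ^ E1.card := by
  have hz0 : 0 < z := lt_of_lt_of_le one_pos hz
  rw [← mgf E0 E1 hE p z, Finset.mul_sum, probE_eq]
  refine Finset.sum_le_sum fun F _ => ?_
  by_cases hc : a ≤ ((F ∩ E1).card : ℝ)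
  · simp only [hc, if_true]
    have key : 1 ≤ z ^ (-a) * z ^ (F ∩ E1).card := by
      rw [← Real.rpow_natCast z (F ∩ E1).card, ← Real.rpow_add hz0]
      exact Real.one_le_rpow hz (by linarith)
    have hw := wgt_nonneg (E0 := E0) (F := F) h0 h1
    nlinarith
  · simp only [hc, if_false]
    have hw := wgt_nonneg (E0 := E0) (F := F) h0 h1
    positivity

lemma markov_lower {E0 E1 : Finset (Sym2 (Fin n))} (hE : E1 ⊆ E0) {p z : ℝ}
    (h0 : 0 ≤ p) (h1 : p ≤ 1) (hz0 : 0 < z) (hz1 : z ≤ 1) (a : ℝ) :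
    probE E0 p (fun F => ((F ∩ E1).card : ℝ) ≤ a)
      ≤ z ^ (-a) * ((1 - p) + p * z) ^ E1.card := by
  rw [← mgf E0 E1 hE p z, Finset.mul_sum, probE_eq]
  refine Finset.sum_le_sum fun F _ => ?_
  by_cases hc : ((F ∩ E1).card : ℝ) ≤ a
  · simp only [hc, if_true]
    have key : 1 ≤ z ^ (-a) * z ^ (F ∩ E1).card := by
      rw [← Real.rpow_natCast z (F ∩ E1).card, ← Real.rpow_add hz0]
      exact Real.one_le_rpow_of_pos_of_le_one_of_nonpos hz0 hz1 (by linarith)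
    have hw := wgt_nonneg (E0 := E0) (F := F) h0 h1
    nlinarith
  · simp only [hc, if_false]
    have hw := wgt_nonneg (E0 := E0) (F := F) h0 h1
    have : (0:ℝ) ≤ z ^ (-a) := Real.rpow_nonneg hz0.le _
    positivity

lemma chernoff_upper {E0 E1 : Finset (Sym2 (Fin n))} (hE : E1 ⊆ E0) {p ε t a : ℝ}
    (hp0 : 0 < p) (hp1 : p < 1) (he0 : 0 < ε) (he1 : ε < 1) (ht : 0 ≤ t)
    (ha : (1 + ε) * (p * E1.card) + t ≤ a) :
    probE E0 p (fun F => a ≤ ((F ∩ E1).card : ℝ)) ≤ Real.exp (-(ε * t) / 2) := by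
  have hcard : (0:ℝ) ≤ (E1.card : ℝ) := Nat.cast_nonneg _
  have hmu : (0:ℝ) ≤ p * E1.card := by positivity
  have ha0 : 0 ≤ a := by nlinarith
  have h := markov_upper hE hp0.le hp1.le (by linarith : (1:ℝ) ≤ 1 + ε) a
  have hb : (1 - p) + p * (1 + ε) = 1 + p * ε := by ring
  have h1 : ((1 - p) + p * (1 + ε)) ^ E1.card ≤ Real.exp ((E1.card : ℝ) * (p * ε)) := by
    rw [hb, Real.exp_nat_mul]
    exact pow_le_pow_left₀ (by nlinarith) (by linarith [Real.add_one_le_exp (p * ε)]) _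
  have h2 : ((1:ℝ) + ε) ^ (-a) = Real.exp (Real.log (1 + ε) * (-a)) :=
    Real.rpow_def_of_pos (by linarith) _
  have hlog : ε / (1 + ε) ≤ Real.log (1 + ε) := by
    have hinv := Real.log_le_sub_one_of_pos (show (0:ℝ) < (1+ε)⁻¹ by positivity)
    rw [Real.log_inv] at hinv
    have h1e : (1+ε)⁻¹ - 1 = -(ε/(1+ε)) := by field_simp; ring
    linarith [h1e ▸ hinv]
  have hlog0 : 0 ≤ Real.log (1 + ε) := le_trans (by positivity) hlog
  have key : p * (E1.card:ℝ) * ε + ε * t / 2 ≤ a * Real.log (1+ε) := by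
    have h3 : ((1+ε) * (p * E1.card) + t) * (ε/(1+ε)) ≤ a * Real.log (1+ε) :=
      mul_le_mul ha hlog (by positivity) ha0
    have h4 : p * (E1.card:ℝ) * ε + ε * t / 2
        ≤ ((1+ε) * (p * E1.card) + t) * (ε/(1+ε)) := by
      rw [mul_div_assoc', le_div_iff₀ (by linarith : (0:ℝ) < 1 + ε)]
      nlinarith [mul_nonneg ht he0.le, mul_nonneg (mul_nonneg ht he0.le) he0.le]
    linarith
  calc probE E0 p (fun F => a ≤ ((F ∩ E1).card : ℝ))
      ≤ ((1:ℝ) + ε) ^ (-a) * ((1 - p) + p * (1 + ε)) ^ E1.card := h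
    _ ≤ Real.exp (Real.log (1 + ε) * (-a)) * Real.exp ((E1.card : ℝ) * (p * ε)) := by
        rw [h2]
        exact mul_le_mul_of_nonneg_left h1 (Real.exp_nonneg _)
    _ = Real.exp (Real.log (1 + ε) * (-a) + (E1.card : ℝ) * (p * ε)) :=
        (Real.exp_add _ _).symm
    _ ≤ Real.exp (-(ε * t) / 2) := by
        apply Real.exp_le_exp.mpr
        nlinarith [key]

lemma chernoff_lower {E0 E1 : Finset (Sym2 (Fin n))} (hE : E1 ⊆ E0) {p ε t a : ℝ}
    (hp0 : 0 < p) (hp1 : p < 1) (he0 : 0 < ε) (he1 : ε < 1) (ht : 0 ≤ t)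
    (ha : a ≤ (1 - ε) * (p * E1.card) - t) :
    probE E0 p (fun F => ((F ∩ E1).card : ℝ) ≤ a) ≤ Real.exp (-(ε * t)) := by
  have hcard : (0:ℝ) ≤ (E1.card : ℝ) := Nat.cast_nonneg _
  have hmu : (0:ℝ) ≤ p * E1.card := by positivity
  have hz0 : (0:ℝ) < 1 - ε := by linarith
  have h := markov_lower hE hp0.le hp1.le hz0 (by linarith : (1:ℝ) - ε ≤ 1) a
  have hb : (1 - p) + p * (1 - ε) = 1 - p * ε := by ring
  have hpe : p * ε < 1 := by nlinarith
  have h1 : ((1 - p) + p * (1 - ε)) ^ E1.card ≤ Real.exp ((E1.card : ℝ) * (-(p * ε))) := by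
    rw [hb, Real.exp_nat_mul]
    exact pow_le_pow_left₀ (by linarith) (by linarith [Real.add_one_le_exp (-(p * ε))]) _
  have h2 : ((1:ℝ) - ε) ^ (-a) = Real.exp (Real.log (1 - ε) * (-a)) :=
    Real.rpow_def_of_pos hz0 _
  have hA : Real.log (1 - ε) ≤ -ε := by
    have := Real.log_le_sub_one_of_pos hz0; linarith
  have hB : -Real.log (1 - ε) ≤ ε / (1 - ε) := by
    have hinv := Real.log_le_sub_one_of_pos (show (0:ℝ) < (1-ε)⁻¹ by positivity)
    rw [Real.log_inv] at hinv
    have h1e : (1-ε)⁻¹ - 1 = ε/(1-ε) := by field_simp; ring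
    linarith [h1e ▸ hinv]
  set M : ℝ := -Real.log (1 - ε) with hM
  have hM0 : ε ≤ M := by rw [hM]; linarith
  have hMB : (1 - ε) * M ≤ ε := by
    calc (1 - ε) * M ≤ (1 - ε) * (ε / (1 - ε)) :=
          mul_le_mul_of_nonneg_left hB hz0.le
      _ = ε := by field_simp
  have key : Real.log (1 - ε) * (-a) + (E1.card : ℝ) * (-(p * ε)) ≤ -(ε * t) := by
    have haM : a * M ≤ ((1 - ε) * (p * E1.card) - t) * M :=
      mul_le_mul_of_nonneg_right ha (by linarith)
    have e1 : ((1 - ε) * (p * E1.card) - t) * M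
        = (p * E1.card) * ((1 - ε) * M) - t * M := by ring
    have e2 : (p * E1.card) * ((1 - ε) * M) ≤ (p * E1.card) * ε :=
      mul_le_mul_of_nonneg_left hMB hmu
    have e3 : t * ε ≤ t * M := mul_le_mul_of_nonneg_left hM0 ht
    have hfin : a * M ≤ (p * E1.card) * ε - t * ε := by
      rw [e1] at haM; linarith
    have : Real.log (1 - ε) * (-a) = a * M := by rw [hM]; ring
    rw [this]; linarith
  calc probE E0 p (fun F => ((F ∩ E1).card : ℝ) ≤ a)
      ≤ ((1:ℝ) - ε) ^ (-a) * ((1 - p) + p * (1 - ε)) ^ E1.card := h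
    _ ≤ Real.exp (Real.log (1 - ε) * (-a)) * Real.exp ((E1.card : ℝ) * (-(p * ε))) := by
        rw [h2]
        exact mul_le_mul_of_nonneg_left h1 (Real.exp_nonneg _)
    _ = Real.exp (Real.log (1 - ε) * (-a) + (E1.card : ℝ) * (-(p * ε))) :=
        (Real.exp_add _ _).symm
    _ ≤ Real.exp (-(ε * t)) := Real.exp_le_exp.mpr key


/-- The index set of Nash-Williams. -/
def TT (n : ℕ) : Finset (Finset (Fin n)) :=
  (univ : Finset (Fin n)).powerset.filter fun S => 2 ≤ S.card

/-- The Nash-Williams quantity `⌈|F[S]|/(|S|−1)⌉`. -/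
def nwq {n : ℕ} (F : Finset (Sym2 (Fin n))) (S : Finset (Fin n)) : ℕ :=
  ⌈((F ∩ S.sym2).card : ℚ) / ((S.card : ℚ) - 1)⌉₊

lemma arbE_eq (F : Finset (Sym2 (Fin n))) : arbE F = (TT n).sup (nwq F) := rfl

lemma card_le_of_nwq_le {F : Finset (Sym2 (Fin n))} {S : Finset (Fin n)}
    (hs2 : 2 ≤ S.card) {m : ℕ} (h : nwq F S ≤ m) :
    ((F ∩ S.sym2).card : ℝ) ≤ (m : ℝ) * ((S.card : ℝ) - 1) := by
  have h2 : ((F ∩ S.sym2).card : ℚ) / ((S.card : ℚ) - 1) ≤ (m : ℚ) := Nat.ceil_le.mp h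
  have hden : (0:ℚ) < (S.card : ℚ) - 1 := by
    have : (2:ℚ) ≤ (S.card : ℚ) := by exact_mod_cast hs2
    linarith
  rw [div_le_iff₀ hden] at h2
  have h3 : (((F ∩ S.sym2).card : ℚ) : ℝ) ≤ (((m : ℚ) * ((S.card : ℚ) - 1) : ℚ) : ℝ) := by
    exact_mod_cast h2
  push_cast at h3
  push_cast
  linarith

lemma nwq_sub_one_le {F : Finset (Sym2 (Fin n))} {S : Finset (Fin n)}
    (hs2 : 2 ≤ S.card) :
    ((nwq F S : ℝ) - 1) * ((S.card : ℝ) - 1) ≤ ((F ∩ S.sym2).card : ℝ) := by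
  have hden : (0:ℚ) < (S.card : ℚ) - 1 := by
    have : (2:ℚ) ≤ (S.card : ℚ) := by exact_mod_cast hs2
    linarith
  have hq0 : 0 ≤ ((F ∩ S.sym2).card : ℚ) / ((S.card : ℚ) - 1) :=
    div_nonneg (Nat.cast_nonneg _) hden.le
  have h := Nat.ceil_lt_add_one hq0
  have h2 : ((nwq F S : ℚ) - 1) * ((S.card : ℚ) - 1) ≤ ((F ∩ S.sym2).card : ℚ) := by
    rw [show nwq F S = ⌈((F ∩ S.sym2).card : ℚ) / ((S.card : ℚ) - 1)⌉₊ from rfl]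
    have h3 : (⌈((F ∩ S.sym2).card : ℚ) / ((S.card : ℚ) - 1)⌉₊ : ℚ) - 1
        ≤ ((F ∩ S.sym2).card : ℚ) / ((S.card : ℚ) - 1) := by linarith
    calc ((⌈((F ∩ S.sym2).card : ℚ) / ((S.card : ℚ) - 1)⌉₊ : ℚ) - 1) * ((S.card : ℚ) - 1)
        ≤ (((F ∩ S.sym2).card : ℚ) / ((S.card : ℚ) - 1)) * ((S.card : ℚ) - 1) :=
          mul_le_mul_of_nonneg_right h3 hden.le
      _ = ((F ∩ S.sym2).card : ℚ) := div_mul_cancel₀ _ hden.ne'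
  have h4 : ((((nwq F S : ℚ) - 1) * ((S.card : ℚ) - 1) : ℚ) : ℝ)
      ≤ ((((F ∩ S.sym2).card : ℚ) : ℚ) : ℝ) := by exact_mod_cast h2
  push_cast at h4
  push_cast
  linarith


lemma exp_neg_nat_mul_log (hn : 0 < n) (k : ℕ) :
    Real.exp (-((k : ℝ) * Real.log n)) = ((n : ℝ)⁻¹) ^ k := by
  rw [Real.exp_neg, Real.exp_nat_mul, Real.exp_log (by exact_mod_cast hn), inv_pow]

lemma sum_pow_card_le (hn2 : 2 ≤ n) (T : Finset (Finset (Fin n))) :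
    ∑ S ∈ T, ((n : ℝ)⁻¹ ^ 2) ^ S.card ≤ 2 := by
  have hn0 : (0:ℝ) < n := by exact_mod_cast Nat.lt_of_lt_of_le two_pos hn2
  set r : ℝ := (n : ℝ)⁻¹ ^ 2 with hr
  have hr0 : 0 ≤ r := by positivity
  have h1 : ∑ S ∈ T, r ^ S.card ≤ ∑ S ∈ (univ : Finset (Fin n)).powerset, r ^ S.card := by
    refine Finset.sum_le_sum_of_subset_of_nonneg
      (fun S _ => Finset.mem_powerset.mpr (Finset.subset_univ S)) (fun S _ _ => by positivity)
  have h2 : ∑ S ∈ (univ : Finset (Fin n)).powerset, r ^ S.card = (r + 1) ^ n := by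
    have h := Finset.prod_add (fun _ : Fin n => r) (fun _ => (1:ℝ)) univ
    simp only [Finset.prod_const, Finset.prod_const_one, mul_one, Finset.card_univ,
      Fintype.card_fin, one_pow] at h
    exact h.symm
  have h3 : (r + 1) ^ n ≤ Real.exp ((n : ℝ) * r) := by
    rw [Real.exp_nat_mul]
    exact pow_le_pow_left₀ (by positivity) (by linarith [Real.add_one_le_exp r]) n
  have h4 : (n : ℝ) * r = (n : ℝ)⁻¹ := by
    rw [hr, pow_two]
    field_simp
  have h5 : (n : ℝ)⁻¹ ≤ Real.log 2 := by
    have hn2' : (2:ℝ) ≤ n := by exact_mod_cast hn2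
    have : (n : ℝ)⁻¹ ≤ 1/2 := by
      rw [inv_le_comm₀ hn0 (by norm_num)]; linarith
    linarith [Real.log_two_gt_d9]
  have h6 : Real.exp ((n : ℝ) * r) ≤ 2 := by
    rw [h4]
    calc Real.exp ((n : ℝ)⁻¹) ≤ Real.exp (Real.log 2) := Real.exp_le_exp.mpr h5
      _ = 2 := Real.exp_log (by norm_num)
  linarith


set_option maxHeartbeats 8000000 in
lemma main_bound (hn2 : 2 ≤ n) (G : SimpleGraph (Fin n)) [DecidableRel G.Adj]
    {p ε : ℝ} (hp0 : 0 < p) (hp1 : p < 1) (he0 : 0 < ε) (he1 : ε < 1) :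
    1 - ((n : ℝ)⁻¹) ^ 2 ≤ probE G.edgeFinset p (fun F =>
      (1 - ε) * p * (arbE G.edgeFinset : ℝ) - 24 * Real.log n / ε ≤ (arbE F : ℝ) ∧
      (arbE F : ℝ) ≤ (1 + ε) * p * (arbE G.edgeFinset : ℝ) + 24 * Real.log n / ε) := by
  classical
  set E0 := G.edgeFinset with hE0def
  set lam := arbE E0 with hlamdef
  set Ll := Real.log n with hLldef
  set ν : ℝ := (n : ℝ)⁻¹ with hνdef
  have hn0R : (0:ℝ) < n := by exact_mod_cast Nat.lt_of_lt_of_le two_pos hn2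
  have hn2R : (2:ℝ) ≤ n := by exact_mod_cast hn2
  have hν0 : 0 < ν := by positivity
  have hν2 : ν ≤ 1/2 := by
    rw [hνdef, inv_le_comm₀ hn0R (by norm_num)]; linarith
  have hLl2 : Real.log 2 ≤ Ll := Real.log_le_log (by norm_num) hn2R
  have hLl0 : 0 < Ll := lt_of_lt_of_le (Real.log_pos one_lt_two) hLl2
  have hLε : 1 ≤ 2 * (Ll / ε) := by
    have h1 : Ll ≤ Ll / ε := by
      rw [le_div_iff₀ he0]; nlinarith
    nlinarith [Real.log_two_gt_d9]
  have hLε' : ε ≤ 2 * Ll := by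
    have hc : Ll / ε * ε = Ll := div_mul_cancel₀ _ he0.ne'
    nlinarith [mul_le_mul_of_nonneg_right hLε he0.le]
  set lamR : ℝ := (lam : ℝ) with hlamR
  have hlamR0 : 0 ≤ lamR := Nat.cast_nonneg _
  set U0 : ℝ := (1 + ε) * p * lamR + 24 * Ll / ε with hU0def
  set A0 : ℝ := (1 - ε) * p * lamR - 24 * Ll / ε with hA0def
  have hLle : 0 < 24 * Ll / ε := by positivity
  have hU0pos : 0 < U0 := by
    rw [hU0def]
    nlinarith [mul_nonneg (mul_nonneg (by linarith : (0:ℝ) ≤ 1 + ε) hp0.le) hlamR0, hLle]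
  have hTcard : ∀ S ∈ TT n, (2:ℝ) ≤ (S.card : ℝ) := by
    intro S hS
    exact_mod_cast (Finset.mem_filter.mp hS).2
  -- edge upper bound from arboricity
  have hedgeU : ∀ S ∈ TT n, ((E0 ∩ S.sym2).card : ℝ) ≤ lamR * ((S.card : ℝ) - 1) := by
    intro S hS
    have hs2 : 2 ≤ S.card := (Finset.mem_filter.mp hS).2
    have h1 : nwq E0 S ≤ lam := by
      rw [hlamdef, arbE_eq]
      exact Finset.le_sup hS
    exact card_le_of_nwq_le hs2 h1
  -- replacing F ∩ S.sym2 by F ∩ (E0 ∩ S.sym2) for F ⊆ E0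
  have hFS : ∀ F ∈ E0.powerset, ∀ S : Finset (Fin n), F ∩ S.sym2 = F ∩ (E0 ∩ S.sym2) := by
    intro F hF S
    rw [← Finset.inter_assoc, Finset.inter_eq_left.mpr (Finset.mem_powerset.mp hF)]
  -- implication: upper failure means some S is bad
  have himpU : ∀ F ∈ E0.powerset, U0 < (arbE F : ℝ) →
      ∃ S ∈ TT n, ((S.card : ℝ) - 1) * (U0 - 1) ≤ ((F ∩ (E0 ∩ S.sym2)).card : ℝ) := by
    intro F hF hU
    have hne : arbE F ≠ 0 := by
      intro h; rw [h] at hU; simp at hU; linarith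
    have hTne : (TT n).Nonempty := by
      rw [Finset.nonempty_iff_ne_empty]
      intro hTe
      apply hne
      rw [arbE_eq, hTe, Finset.sup_empty]
      rfl
    obtain ⟨S, hST, hsup⟩ := Finset.exists_mem_eq_sup (TT n) hTne (nwq F)
    have harb : (arbE F : ℝ) = (nwq F S : ℝ) := by rw [arbE_eq, hsup]
    have hs2 : 2 ≤ S.card := (Finset.mem_filter.mp hST).2
    have hsR : (2:ℝ) ≤ (S.card : ℝ) := hTcard S hST
    have hkey := nwq_sub_one_le (F := F) hs2
    refine ⟨S, hST, ?_⟩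
    rw [← hFS F hF S]
    have hstep : ((S.card : ℝ) - 1) * (U0 - 1) ≤ ((nwq F S : ℝ) - 1) * ((S.card : ℝ) - 1) := by
      rw [← harb] at *
      nlinarith
    linarith
  -- Probability that some S is bad for the upper side
  have hUnion : probE E0 p (fun F => ∃ S ∈ TT n,
      ((S.card : ℝ) - 1) * (U0 - 1) ≤ ((F ∩ (E0 ∩ S.sym2)).card : ℝ)) ≤ 2 * ν ^ 5 := by
    calc probE E0 p (fun F => ∃ S ∈ TT n,
          ((S.card : ℝ) - 1) * (U0 - 1) ≤ ((F ∩ (E0 ∩ S.sym2)).card : ℝ))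
        ≤ ∑ S ∈ TT n, probE E0 p
            (fun F => ((S.card : ℝ) - 1) * (U0 - 1) ≤ ((F ∩ (E0 ∩ S.sym2)).card : ℝ)) :=
          probE_bUnion hp0.le hp1.le (TT n) _
      _ ≤ ∑ S ∈ TT n, ν ^ 5 * (ν ^ 2) ^ S.card := by
          refine Finset.sum_le_sum fun S hS => ?_
          have hsR := hTcard S hS
          have hsR1 : (1:ℝ) ≤ (S.card : ℝ) - 1 := by linarith
          have ht0 : 0 ≤ ((S.card : ℝ) - 1) * (22 * Ll / ε) := by positivity
          have hch := chernoff_upper (E0 := E0) (E1 := E0 ∩ S.sym2)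
            Finset.inter_subset_left hp0 hp1 he0 he1 ht0 (a := ((S.card : ℝ) - 1) * (U0 - 1)) ?ha
          case ha =>
            have hx := hedgeU S hS
            have h1 : (1 + ε) * (p * ((E0 ∩ S.sym2).card : ℝ))
                ≤ (1 + ε) * p * (lamR * ((S.card : ℝ) - 1)) := by
              rw [mul_assoc]
              refine mul_le_mul_of_nonneg_left ?_ (by linarith)
              exact mul_le_mul_of_nonneg_left hx hp0.le
            rw [hU0def]
            have h2 : ((S.card:ℝ) - 1) * (22 * Ll / ε + 1) ≤ ((S.card:ℝ) - 1) * (24 * Ll / ε) := by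
              refine mul_le_mul_of_nonneg_left ?_ (by linarith)
              have he : 2 * (Ll / ε) = 2 * Ll / ε := by ring
              have h22 : 22 * Ll / ε + 2 * Ll / ε = 24 * Ll / ε := by ring
              linarith
            nlinarith [h1, h2]
          refine le_trans hch ?_
          have heq : -(ε * (((S.card : ℝ) - 1) * (22 * Ll / ε))) / 2
              = -(((S.card : ℝ) - 1) * (11 * Ll)) := by
            field_simp; ring
          rw [heq]
          have hmono : -(((S.card : ℝ) - 1) * (11 * Ll))
              ≤ -(((2 * S.card + 5 : ℕ) : ℝ) * Ll) := by
            push_cast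
            nlinarith
          calc Real.exp (-(((S.card : ℝ) - 1) * (11 * Ll)))
              ≤ Real.exp (-(((2 * S.card + 5 : ℕ) : ℝ) * Ll)) := Real.exp_le_exp.mpr hmono
            _ = ν ^ (2 * S.card + 5) := by
                rw [hνdef, hLldef]
                exact exp_neg_nat_mul_log (by omega) _
            _ = ν ^ 5 * (ν ^ 2) ^ S.card := by
                rw [← pow_mul, ← pow_add]
                ring_nf
      _ = ν ^ 5 * ∑ S ∈ TT n, (ν ^ 2) ^ S.card := by rw [Finset.mul_sum]
      _ ≤ ν ^ 5 * 2 := by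
          refine mul_le_mul_of_nonneg_left ?_ (by positivity)
          rw [hνdef]
          exact sum_pow_card_le hn2 (TT n)
      _ = 2 * ν ^ 5 := by ring
  -- the complement ("bad") event has small probability
  have hgoal : probE E0 p
      (fun F => ¬ (A0 ≤ (arbE F : ℝ) ∧ (arbE F : ℝ) ≤ U0)) ≤ ν ^ 2 := by
    have h3ν : 3 * ν ^ 5 ≤ ν ^ 2 := by
      have hcube : ν ^ 3 ≤ (1/2) ^ 3 := pow_le_pow_left₀ hν0.le hν2 3
      nlinarith [pow_pos hν0 2, pow_pos hν0 3, pow_pos hν0 5]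
    by_cases hlam1 : 1 ≤ lam
    · -- there is an optimal set Sst
      have hlamR1 : (1:ℝ) ≤ lamR := by rw [hlamR]; exact_mod_cast hlam1
      have hTne : (TT n).Nonempty := by
        rw [Finset.nonempty_iff_ne_empty]
        intro hTe
        have hz : lam = 0 := by rw [hlamdef, arbE_eq, hTe, Finset.sup_empty]; rfl
        omega
      obtain ⟨Sst, hSst, hsupst⟩ := Finset.exists_mem_eq_sup (TT n) hTne (nwq E0)
      have hs2st : 2 ≤ Sst.card := (Finset.mem_filter.mp hSst).2
      have hsRst : (2:ℝ) ≤ (Sst.card : ℝ) := hTcard Sst hSst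
      have hlamnw : lamR = (nwq E0 Sst : ℝ) := by
        rw [hlamR, hlamdef, arbE_eq, hsupst]
      have hedgeL : (lamR - 1) * ((Sst.card : ℝ) - 1) ≤ ((E0 ∩ Sst.sym2).card : ℝ) := by
        rw [hlamnw]; exact nwq_sub_one_le hs2st
      -- lower-side implication
      have himpL : ∀ F ∈ E0.powerset, (arbE F : ℝ) < A0 →
          ((F ∩ (E0 ∩ Sst.sym2)).card : ℝ) ≤ ((Sst.card : ℝ) - 1) * A0 := by
        intro F hF hlow
        have h1 : nwq F Sst ≤ arbE F := by
          rw [arbE_eq]; exact Finset.le_sup hSst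
        have h1R : (nwq F Sst : ℝ) ≤ (arbE F : ℝ) := by exact_mod_cast h1
        have h2 := card_le_of_nwq_le (F := F) hs2st (le_refl (nwq F Sst))
        rw [← hFS F hF Sst]
        calc ((F ∩ Sst.sym2).card : ℝ) ≤ (nwq F Sst : ℝ) * ((Sst.card : ℝ) - 1) := h2
          _ ≤ ((Sst.card : ℝ) - 1) * A0 := by nlinarith
      -- probability of the lower bad event
      have hsR1 : (1:ℝ) ≤ (Sst.card : ℝ) - 1 := by linarith
      have htL : 0 ≤ ((Sst.card : ℝ) - 1) * (22 * Ll / ε) := by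
        have h22 : 0 ≤ 22 * Ll / ε := by positivity
        nlinarith
      have hchL := chernoff_lower (E0 := E0) (E1 := E0 ∩ Sst.sym2)
          Finset.inter_subset_left hp0 hp1 he0 he1 htL
          (a := ((Sst.card : ℝ) - 1) * A0) ?haL
      case haL =>
        have hxL : (1 - ε) * p * ((lamR - 1) * ((Sst.card : ℝ) - 1))
            ≤ (1 - ε) * (p * ((E0 ∩ Sst.sym2).card : ℝ)) := by
          rw [mul_assoc]
          refine mul_le_mul_of_nonneg_left ?_ (by linarith)
          exact mul_le_mul_of_nonneg_left hedgeL hp0.le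
        have hB : ((Sst.card:ℝ) - 1) * ((1 - ε) * p + 22 * Ll / ε)
            ≤ ((Sst.card:ℝ) - 1) * (24 * Ll / ε) := by
          refine mul_le_mul_of_nonneg_left ?_ (by linarith)
          have he2 : 2 * (Ll / ε) = 2 * Ll / ε := by ring
          have h22 : 22 * Ll / ε + 2 * Ll / ε = 24 * Ll / ε := by ring
          nlinarith
        rw [hA0def]
        nlinarith [hxL, hB]
      have hL5 : probE E0 p (fun F =>
          ((F ∩ (E0 ∩ Sst.sym2)).card : ℝ) ≤ ((Sst.card : ℝ) - 1) * A0) ≤ ν ^ 5 := by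
        refine le_trans hchL ?_
        have heqL : -(ε * (((Sst.card : ℝ) - 1) * (22 * Ll / ε)))
            = -(((Sst.card : ℝ) - 1) * (22 * Ll)) := by
          field_simp
        rw [heqL]
        have hm : -(((Sst.card : ℝ) - 1) * (22 * Ll)) ≤ -(((5:ℕ) : ℝ) * Ll) := by
          push_cast
          nlinarith
        calc Real.exp (-(((Sst.card : ℝ) - 1) * (22 * Ll)))
            ≤ Real.exp (-(((5:ℕ) : ℝ) * Ll)) := Real.exp_le_exp.mpr hm
          _ = ν ^ 5 := by
              rw [hνdef, hLldef]
              exact exp_neg_nat_mul_log (by omega) 5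
      -- union of the two bad events
      calc probE E0 p (fun F => ¬ (A0 ≤ (arbE F : ℝ) ∧ (arbE F : ℝ) ≤ U0))
          ≤ probE E0 p (fun F =>
              (((F ∩ (E0 ∩ Sst.sym2)).card : ℝ) ≤ ((Sst.card : ℝ) - 1) * A0) ∨
              (∃ S ∈ TT n,
                ((S.card : ℝ) - 1) * (U0 - 1) ≤ ((F ∩ (E0 ∩ S.sym2)).card : ℝ))) := by
            refine probE_mono hp0.le hp1.le ?_
            intro F hF hng
            rcases not_and_or.mp hng with h | h
            · exact Or.inl (himpL F hF (not_le.mp h))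
            · exact Or.inr (himpU F hF (not_le.mp h))
        _ ≤ probE E0 p (fun F =>
              ((F ∩ (E0 ∩ Sst.sym2)).card : ℝ) ≤ ((Sst.card : ℝ) - 1) * A0) +
            probE E0 p (fun F => ∃ S ∈ TT n,
              ((S.card : ℝ) - 1) * (U0 - 1) ≤ ((F ∩ (E0 ∩ S.sym2)).card : ℝ)) :=
            probE_or hp0.le hp1.le
        _ ≤ ν ^ 5 + 2 * ν ^ 5 := add_le_add hL5 hUnion
        _ ≤ ν ^ 2 := by linarith
    · -- lam = 0 : the lower bound is trivial
      have hlam0 : lam = 0 := by omega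
      have hlamR00 : lamR = 0 := by rw [hlamR, hlam0]; norm_num
      have hA0neg : A0 < 0 := by
        rw [hA0def, hlamR00]
        nlinarith
      calc probE E0 p (fun F => ¬ (A0 ≤ (arbE F : ℝ) ∧ (arbE F : ℝ) ≤ U0))
          ≤ probE E0 p (fun F => ∃ S ∈ TT n,
              ((S.card : ℝ) - 1) * (U0 - 1) ≤ ((F ∩ (E0 ∩ S.sym2)).card : ℝ)) := by
            refine probE_mono hp0.le hp1.le ?_
            intro F hF hng
            rcases not_and_or.mp hng with h | h
            · exact absurd (le_trans hA0neg.le (Nat.cast_nonneg _)) h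
            · exact himpU F hF (not_le.mp h)
        _ ≤ 2 * ν ^ 5 := hUnion
        _ ≤ ν ^ 2 := by nlinarith [pow_pos hν0 5]
  exact one_sub_le_probE (A := fun F => A0 ≤ (arbE F : ℝ) ∧ (arbE F : ℝ) ≤ U0) hgoal

end ArbAux

/-- Sampling each edge independently with probability `p`, with high probability the
arboricity satisfies
`λ(G_p) ∈ [(1 − ε)·p·λ(G) − O(log n / ε), (1 + ε)·p·λ(G) + O(log n / ε)]`. -/
theorem arboricity_sample_whp :
    ∃ C c : ℝ, 0 < C ∧ 0 < c ∧
      ∀ (n : ℕ) (G : SimpleGraph (Fin n)) [DecidableRel G.Adj] (p ε : ℝ),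
        0 < p → p < 1 → 0 < ε → ε < 1 →
        1 - (n : ℝ) ^ (-c) ≤
          probE G.edgeFinset p (fun F =>
            (1 - ε) * p * (arbE G.edgeFinset : ℝ) - C * Real.log n / ε
                ≤ (arbE F : ℝ) ∧
              (arbE F : ℝ) ≤
                (1 + ε) * p * (arbE G.edgeFinset : ℝ) + C * Real.log n / ε) := by
  refine ⟨24, 2, by norm_num, by norm_num, ?_⟩
  intro n G _ p ε hp0 hp1 he0 he1
  by_cases hn2 : 2 ≤ n
  · have h := ArbAux.main_bound hn2 G hp0 hp1 he0 he1
    have hn0R : (0:ℝ) < n := by exact_mod_cast Nat.lt_of_lt_of_le two_pos hn2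
    have hr : (n:ℝ) ^ (-(2:ℝ)) = ((n:ℝ)⁻¹) ^ 2 := by
      rw [Real.rpow_neg hn0R.le, show ((2:ℝ)) = ((2:ℕ):ℝ) by norm_num,
        Real.rpow_natCast, inv_pow]
    rw [hr]
    exact h
  · have hn1 : n = 0 ∨ n = 1 := by omega
    rcases hn1 with rfl | rfl
    · -- n = 0
      have hE : G.edgeFinset = ∅ := Finset.eq_empty_of_isEmpty _
      have hT0 : (ArbAux.TT 0) = ∅ := by decide
      have harb : ∀ F : Finset (Sym2 (Fin 0)), arbE F = 0 := by
        intro F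
        rw [ArbAux.arbE_eq, hT0, Finset.sup_empty]
        rfl
      have hA : (1 - ε) * p * (arbE G.edgeFinset : ℝ) - 24 * Real.log (0:ℕ) / ε
            ≤ (arbE (∅ : Finset (Sym2 (Fin 0))) : ℝ) ∧
          (arbE (∅ : Finset (Sym2 (Fin 0))) : ℝ)
            ≤ (1 + ε) * p * (arbE G.edgeFinset : ℝ) + 24 * Real.log (0:ℕ) / ε := by
        rw [harb G.edgeFinset, harb ∅]
        norm_num
      have hprob : probE G.edgeFinset p (fun F =>
          (1 - ε) * p * (arbE G.edgeFinset : ℝ) - 24 * Real.log (0:ℕ) / ε ≤ (arbE F : ℝ) ∧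
          (arbE F : ℝ) ≤ (1 + ε) * p * (arbE G.edgeFinset : ℝ) + 24 * Real.log (0:ℕ) / ε)
          = 1 := by
        rw [probE, hE]
        simp [harb]
      rw [hprob]
      have : ((0:ℕ):ℝ) ^ (-(2:ℝ)) = 0 := by
        rw [Nat.cast_zero, Real.zero_rpow (by norm_num)]
      rw [this]
      norm_num
    · -- n = 1
      have : ((1:ℕ):ℝ) ^ (-(2:ℝ)) = 1 := by
        rw [Nat.cast_one, Real.one_rpow]
      rw [this]
      have := ArbAux.probE_nonneg (E0 := G.edgeFinset) hp0.le hp1.le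
        (fun F => (1 - ε) * p * (arbE G.edgeFinset : ℝ) - 24 * Real.log (1:ℕ) / ε ≤ (arbE F : ℝ) ∧
          (arbE F : ℝ) ≤ (1 + ε) * p * (arbE G.edgeFinset : ℝ) + 24 * Real.log (1:ℕ) / ε)
      linarith
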